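/- Let I ≥ 2 and assume: (iii) 𝓜 := ⋂_{i=1}^I 𝓜_i is nonempty; and (iv) for every δ ∈ ℝ^n \ {0}, inf_{Q ∈ 𝓜} ∫ (δ·B) dQ < sup_{Q ∈ 𝓜} ∫ (δ·B) dQ. Then the function f : (ℝ^n)^{I−1} → ℝ defined by f(a₁, …, a_{I−1}) = Σ_{i=1}^{I−1} r_i(a_i) + r_I( −Σ_{i=1}^{I−1} a_i ) is coercive: liminf_{‖(a₁,…,a_{I−1})‖ → ∞} f(a₁, …, a_{I−1}) / ‖(a₁, …, a_{I−1})‖ > 0; in particular f(a) → +∞ as ‖a‖ → ∞ and f attains its minimum over (ℝ^n)^{I−1}. -/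

import Mathlib

open MeasureTheory Filter Topology

/-- With `I = K + 1 ≥ 2` agents, under the nonempty-intersection and
non-degeneracy assumptions, the function
`f(a₁,…,a_K) = Σ_{i≤K} r_i(a_i) + r_{K+1}(−Σ a_i)` is coercive:
`liminf_{‖a‖→∞} f(a)/‖a‖ > 0`; in particular `f(a) → ∞` as `‖a‖ → ∞` and `f` attains
its minimum. -/
theorem stmt6
    {Ω : Type*} [MeasurableSpace Ω] (P : Measure Ω) [IsProbabilityMeasure P]
    {n : ℕ} (B : Fin n → Ω → ℝ)
    (hBmeas : ∀ j, Measurable (B j))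
    (C : ℝ) (hBbdd : ∀ j ω, |B j ω| ≤ C)
    {K : ℕ} (hK : 1 ≤ K)
    (M : Fin (K + 1) → Set (Measure Ω)) (hMne : ∀ i, (M i).Nonempty)
    (hMprob : ∀ i, ∀ Q ∈ M i, IsProbabilityMeasure Q)
    (hMac : ∀ i, ∀ Q ∈ M i, Q ≪ P)
    (α : Fin (K + 1) → Measure Ω → ℝ) (hα : ∀ i, ∀ Q ∈ M i, 0 ≤ α i Q)
    (r : Fin (K + 1) → (Fin n → ℝ) → ℝ)
    (hr : ∀ i (a : Fin n → ℝ),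
      r i a = sSup {x | ∃ Q ∈ M i, x = ∫ ω, -(∑ j, a j * B j ω) ∂Q - α i Q})
    (hM : (⋂ i, M i).Nonempty)
    (hiv : ∀ δ : Fin n → ℝ, δ ≠ 0 →
      sInf {x | ∃ Q ∈ ⋂ i, M i, x = ∫ ω, (∑ j, δ j * B j ω) ∂Q} <
      sSup {x | ∃ Q ∈ ⋂ i, M i, x = ∫ ω, (∑ j, δ j * B j ω) ∂Q})
    (f : (Fin K → Fin n → ℝ) → ℝ)
    (hf : ∀ a : Fin K → Fin n → ℝ,
      f a = ∑ i : Fin K, r i.castSucc (a i) + r (Fin.last K) (-(∑ i, a i))) :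
    (0 : EReal) < Filter.liminf
        (fun a : Fin K → Fin n → ℝ => ((f a / ‖a‖ : ℝ) : EReal))
        (Filter.comap (fun a : Fin K → Fin n → ℝ => ‖a‖) Filter.atTop) ∧
    Tendsto f (Filter.comap (fun a : Fin K → Fin n → ℝ => ‖a‖) Filter.atTop) atTop ∧
    ∃ amin : Fin K → Fin n → ℝ, ∀ a, f amin ≤ f a := by
  classical
  rcases Nat.eq_zero_or_pos n with hn | hn
  · subst hn
    have hbot : (Filter.comap (fun a : Fin K → Fin 0 → ℝ => ‖a‖) Filter.atTop) = ⊥ := by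
      rw [← Filter.empty_mem_iff_bot]
      refine Filter.mem_comap.2 ⟨Set.Ici 1, Filter.mem_atTop 1, ?_⟩
      intro a ha
      have h0 : a = 0 := Subsingleton.elim a 0
      simp only [Set.mem_preimage, Set.mem_Ici, h0, norm_zero] at ha
      linarith
    rw [hbot]
    refine ⟨?_, tendsto_bot, ⟨0, fun a => le_of_eq (congrArg f (Subsingleton.elim 0 a))⟩⟩
    have h1 : (⊤ : EReal) ≤ Filter.liminf
        (fun a : Fin K → Fin 0 → ℝ => ((f a / ‖a‖ : ℝ) : EReal)) ⊥ :=
      Filter.le_liminf_of_le (by isBoundedDefault) (by simp)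
    exact lt_of_lt_of_le (by simp) h1
  -- main case : 0 < n
  have hΩ : Nonempty Ω := by
    by_contra h
    rw [not_nonempty_iff] at h
    have h2 := measure_univ (μ := P)
    rw [Set.univ_eq_empty_iff.2 h, measure_empty] at h2
    simp at h2
  have hC : 0 ≤ C := le_trans (abs_nonneg _) (hBbdd ⟨0, hn⟩ (Classical.arbitrary Ω))
  set β : Measure Ω → Fin n → ℝ := fun Q j => ∫ ω, B j ω ∂Q with hβ
  have hint : ∀ (Q : Measure Ω), IsProbabilityMeasure Q → ∀ j, Integrable (B j) Q := by
    intro Q hQ j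
    exact ⟨(hBmeas j).aestronglyMeasurable,
      HasFiniteIntegral.of_bounded (C := C)
        (Filter.Eventually.of_forall (fun ω => by simpa using hBbdd j ω))⟩
  have hβbdd : ∀ (Q : Measure Ω), IsProbabilityMeasure Q → ∀ j, |β Q j| ≤ C := by
    intro Q hQ j
    have h2 := norm_integral_le_of_norm_le_const (μ := Q) (f := B j) (C := C)
      (Filter.Eventually.of_forall fun ω => by simpa using hBbdd j ω)
    simpa [hβ] using h2
  have hcalc : ∀ (Q : Measure Ω), IsProbabilityMeasure Q → ∀ w : Fin n → ℝ,
      (∫ ω, (∑ j, w j * B j ω) ∂Q) = ∑ j, w j * β Q j := by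
    intro Q hQ w
    rw [integral_finset_sum _ (fun j _ => ((hint Q hQ j).const_mul (w j)))]
    exact Finset.sum_congr rfl fun j _ => MeasureTheory.integral_const_mul _ _
  have hcalcneg : ∀ (Q : Measure Ω), IsProbabilityMeasure Q → ∀ w : Fin n → ℝ,
      (∫ ω, -(∑ j, w j * B j ω) ∂Q) = -∑ j, w j * β Q j := by
    intro Q hQ w; rw [integral_neg, hcalc Q hQ w]
  have hSne : ∀ (i : Fin (K+1)) (w : Fin n → ℝ),
      {x | ∃ Q ∈ M i, x = ∫ ω, -(∑ j, w j * B j ω) ∂Q - α i Q}.Nonempty := by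
    intro i w; obtain ⟨Q, hQ⟩ := hMne i; exact ⟨_, Q, hQ, rfl⟩
  have hSbdd : ∀ (i : Fin (K+1)) (w : Fin n → ℝ),
      BddAbove {x | ∃ Q ∈ M i, x = ∫ ω, -(∑ j, w j * B j ω) ∂Q - α i Q} := by
    intro i w
    refine ⟨∑ j, |w j| * C, ?_⟩
    rintro x ⟨Q, hQ, rfl⟩
    have hQp := hMprob i Q hQ
    rw [hcalcneg Q hQp w]
    have h1 : -∑ j, w j * β Q j ≤ ∑ j, |w j| * C := by
      calc -∑ j, w j * β Q j ≤ |∑ j, w j * β Q j| := neg_le_abs _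
        _ ≤ ∑ j, |w j * β Q j| := Finset.abs_sum_le_sum_abs _ _
        _ ≤ ∑ j, |w j| * C := Finset.sum_le_sum fun j _ => by
            rw [abs_mul]; exact mul_le_mul_of_nonneg_left (hβbdd Q hQp j) (abs_nonneg _)
    have h2 := hα i Q hQ
    linarith
  have hrge : ∀ (i : Fin (K+1)) (w : Fin n → ℝ) (Q : Measure Ω), Q ∈ M i →
      -∑ j, w j * β Q j - α i Q ≤ r i w := by
    intro i w Q hQ
    rw [hr]
    exact le_csSup (hSbdd i w) ⟨Q, hQ, by rw [hcalcneg Q (hMprob i Q hQ) w]⟩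
  have hrlip : ∀ (i : Fin (K+1)) (w w' : Fin n → ℝ),
      r i w ≤ r i w' + (n * C) * ‖w - w'‖ := by
    intro i w w'
    rw [hr i w]
    refine csSup_le (hSne i w) ?_
    rintro x ⟨Q, hQ, rfl⟩
    have hQp := hMprob i Q hQ
    rw [hcalcneg Q hQp w]
    have key : ∑ j, (w' j - w j) * β Q j ≤ (n * C) * ‖w - w'‖ := by
      calc ∑ j, (w' j - w j) * β Q j ≤ ∑ _j : Fin n, C * ‖w - w'‖ := by
            refine Finset.sum_le_sum fun j _ => ?_
            calc (w' j - w j) * β Q j ≤ |(w' j - w j) * β Q j| := le_abs_self _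
              _ = |w' j - w j| * |β Q j| := abs_mul _ _
              _ ≤ ‖w - w'‖ * C := by
                  refine mul_le_mul ?_ (hβbdd Q hQp j) (abs_nonneg _) (norm_nonneg _)
                  have h3 : |w' j - w j| = ‖(w' - w) j‖ := by simp [Real.norm_eq_abs]
                  rw [h3]
                  exact le_trans (norm_le_pi_norm (w' - w) j) (le_of_eq (norm_sub_rev w' w))
              _ = C * ‖w - w'‖ := mul_comm _ _
        _ = n * C * ‖w - w'‖ := by
            simp [Finset.sum_const, Fintype.card_fin, nsmul_eq_mul]; ring
    have hid : ∑ j, (w' j - w j) * β Q j = ∑ j, w' j * β Q j - ∑ j, w j * β Q j := by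
      rw [← Finset.sum_sub_distrib]; exact Finset.sum_congr rfl fun j _ => by ring
    have h4 := hrge i w' Q hQ
    linarith
  have hrcont : ∀ i, Continuous (r i) := by
    intro i
    refine LipschitzWith.continuous (K := ⟨n * C, by positivity⟩) ?_
    refine LipschitzWith.of_dist_le_mul fun w w' => ?_
    have h1 := hrlip i w w'
    have h2 := hrlip i w' w
    rw [norm_sub_rev] at h2
    rw [Real.dist_eq, dist_eq_norm, abs_sub_le_iff]
    constructor
    · exact (by linarith : r i w - r i w' ≤ (n * C) * ‖w - w'‖)
    · exact (by linarith : r i w' - r i w ≤ (n * C) * ‖w - w'‖)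
  set M' : Set (Measure Ω) := ⋂ i, M i with hM'def
  obtain ⟨Q₀, hQ₀⟩ := hM
  have hM'sub : ∀ Q ∈ M', ∀ i, Q ∈ M i := fun Q hQ i => Set.mem_iInter.1 hQ i
  have hM'prob : ∀ Q ∈ M', IsProbabilityMeasure Q := fun Q hQ => hMprob 0 Q (hM'sub Q hQ 0)
  have hpair : ∀ δ : Fin n → ℝ, δ ≠ 0 → ∃ Q' ∈ M', ∃ Q'' ∈ M',
      ∑ j, δ j * β Q' j < ∑ j, δ j * β Q'' j := by
    intro δ hδ
    by_contra hcon
    push_neg at hcon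
    have hall : ∀ Q ∈ M', ∑ j, δ j * β Q j = ∑ j, δ j * β Q₀ j := fun Q hQ =>
      le_antisymm (hcon Q₀ hQ₀ Q hQ) (hcon Q hQ Q₀ hQ₀)
    have hset : {x | ∃ Q ∈ M', x = ∫ ω, (∑ j, δ j * B j ω) ∂Q} = {∑ j, δ j * β Q₀ j} := by
      ext x
      simp only [Set.mem_setOf_eq, Set.mem_singleton_iff]
      constructor
      · rintro ⟨Q, hQ, rfl⟩
        rw [hcalc Q (hM'prob Q hQ) δ]; exact hall Q hQ
      · rintro rfl
        exact ⟨Q₀, hQ₀, by rw [hcalc Q₀ (hM'prob Q₀ hQ₀) δ]⟩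
    have h5 := hiv δ hδ
    rw [hset] at h5
    simp at h5
  set Λ : (Fin (K+1) → Measure Ω) → (Fin K → Fin n → ℝ) → ℝ :=
    fun Q a => ∑ i : Fin K, ∑ j, a i j * (β (Q (Fin.last K)) j - β (Q i.castSucc) j) with hΛ
  have hΛpos : ∀ u : Fin K → Fin n → ℝ, u ≠ 0 → ∃ Q : Fin (K+1) → Measure Ω,
      (∀ i, Q i ∈ M') ∧ 0 < Λ Q u := by
    intro u hu
    obtain ⟨i₀, hi₀⟩ : ∃ i₀, u i₀ ≠ 0 := by
      by_contra h; push_neg at h; exact hu (funext h)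
    obtain ⟨Q', hQ', Q'', hQ'', hlt⟩ := hpair (u i₀) hi₀
    refine ⟨fun i => if i = i₀.castSucc then Q' else Q'',
      fun i => by dsimp only; split <;> assumption, ?_⟩
    have heq : Λ (fun i => if i = i₀.castSucc then Q' else Q'') u
        = ∑ i : Fin K, (if i = i₀ then (∑ j, u i₀ j * (β Q'' j - β Q' j)) else 0) := by
      rw [hΛ]
      refine Finset.sum_congr rfl fun i _ => ?_
      dsimp only
      rw [if_neg (Fin.castSucc_lt_last i₀).ne']
      by_cases hi : i = i₀
      · subst hi; rw [if_pos rfl, if_pos rfl]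
      · rw [if_neg hi, if_neg (fun h => hi (Fin.castSucc_inj.mp h))]
        simp
    rw [heq, Finset.sum_ite_eq' Finset.univ i₀ (fun _ => ∑ j, u i₀ j * (β Q'' j - β Q' j))]
    simp only [Finset.mem_univ, if_true]
    have h6 : ∑ j, u i₀ j * (β Q'' j - β Q' j)
        = (∑ j, u i₀ j * β Q'' j) - ∑ j, u i₀ j * β Q' j := by
      rw [← Finset.sum_sub_distrib]; exact Finset.sum_congr rfl fun j _ => by ring
    rw [h6]; linarith
  have Hsel : ∀ u : Fin K → Fin n → ℝ, ∃ Q : Fin (K+1) → Measure Ω,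
      (∀ i, Q i ∈ M') ∧ (u ≠ 0 → 0 < Λ Q u) := by
    intro u
    by_cases hu : u = 0
    · exact ⟨fun _ => Q₀, fun _ => hQ₀, fun h => absurd hu h⟩
    · obtain ⟨Q, h1, h2⟩ := hΛpos u hu; exact ⟨Q, h1, fun _ => h2⟩
  choose Qs hQsmem hQspos using Hsel
  have hΛcont : ∀ Q, Continuous (Λ Q) := by
    intro Q
    rw [hΛ]
    exact continuous_finset_sum _ fun i _ => continuous_finset_sum _ fun j _ =>
      (by fun_prop)
  have hΛhom : ∀ Q (s : ℝ) (a : Fin K → Fin n → ℝ), Λ Q (s • a) = s * Λ Q a := by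
    intro Q s a
    rw [hΛ]
    dsimp only
    rw [Finset.mul_sum]
    refine Finset.sum_congr rfl fun i _ => ?_
    rw [Finset.mul_sum]
    refine Finset.sum_congr rfl fun j _ => ?_
    simp only [Pi.smul_apply, smul_eq_mul]; ring
  have hflow : ∀ (Q : Fin (K+1) → Measure Ω), (∀ i, Q i ∈ M') →
      ∀ a : Fin K → Fin n → ℝ, Λ Q a - (∑ i, α i (Q i)) ≤ f a := by
    intro Q hQ a
    rw [hf]
    have h1 : ∀ i : Fin K,
        -∑ j, a i j * β (Q i.castSucc) j - α i.castSucc (Q i.castSucc) ≤ r i.castSucc (a i) :=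
      fun i => hrge i.castSucc (a i) _ (hM'sub _ (hQ _) _)
    have h2 : -∑ j, (-(∑ i, a i)) j * β (Q (Fin.last K)) j - α (Fin.last K) (Q (Fin.last K))
        ≤ r (Fin.last K) (-(∑ i, a i)) :=
      hrge (Fin.last K) _ _ (hM'sub _ (hQ _) _)
    have h3 : -∑ j, (-(∑ i, a i)) j * β (Q (Fin.last K)) j
        = ∑ i : Fin K, ∑ j, a i j * β (Q (Fin.last K)) j := by
      have hj : ∀ j : Fin n, (-(∑ i, a i)) j * β (Q (Fin.last K)) j
          = -(∑ i : Fin K, a i j * β (Q (Fin.last K)) j) := by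
        intro j
        simp only [Pi.neg_apply, Finset.sum_apply]
        rw [neg_mul, Finset.sum_mul]
      rw [Finset.sum_congr rfl (fun j _ => hj j), Finset.sum_neg_distrib, neg_neg,
        Finset.sum_comm]
    have h4 : Λ Q a = (∑ i : Fin K, ∑ j, a i j * β (Q (Fin.last K)) j)
        - ∑ i : Fin K, ∑ j, a i j * β (Q i.castSucc) j := by
      rw [hΛ, ← Finset.sum_sub_distrib]
      refine Finset.sum_congr rfl fun i _ => ?_
      rw [← Finset.sum_sub_distrib]; exact Finset.sum_congr rfl fun j _ => by ring
    have h5 : ∑ i : Fin (K+1), α i (Q i)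
        = ∑ i : Fin K, α i.castSucc (Q i.castSucc) + α (Fin.last K) (Q (Fin.last K)) :=
      Fin.sum_univ_castSucc _
    have hsum' : ∑ i : Fin K, (-∑ j, a i j * β (Q i.castSucc) j - α i.castSucc (Q i.castSucc))
        ≤ ∑ i : Fin K, r i.castSucc (a i) := Finset.sum_le_sum fun i _ => h1 i
    rw [Finset.sum_sub_distrib, Finset.sum_neg_distrib] at hsum'
    rw [h3] at h2
    rw [h4, h5]
    linarith
  haveI : Nontrivial (Fin K → Fin n → ℝ) := by
    refine ⟨⟨fun _ _ => 1, 0, fun h => ?_⟩⟩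
    have h2 := congrFun (congrFun h ⟨0, hK⟩) ⟨0, hn⟩
    simpa using h2
  have hcover : Metric.sphere (0 : Fin K → Fin n → ℝ) 1 ⊆
      ⋃ u : Metric.sphere (0 : Fin K → Fin n → ℝ) 1,
        {a | Λ (Qs u.1) u.1 / 2 < Λ (Qs u.1) a} := by
    intro v hv
    have hvne : v ≠ 0 := by
      intro h
      rw [Metric.mem_sphere, dist_zero_right, h, norm_zero] at hv
      norm_num at hv
    have hp := hQspos v hvne
    exact Set.mem_iUnion.2 ⟨⟨v, hv⟩, show Λ (Qs v) v / 2 < Λ (Qs v) v by linarith⟩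
  obtain ⟨t, ht⟩ := (isCompact_sphere (0 : Fin K → Fin n → ℝ) 1).elim_finite_subcover
    (fun u : Metric.sphere (0 : Fin K → Fin n → ℝ) 1 => {a | Λ (Qs u.1) u.1 / 2 < Λ (Qs u.1) a})
    (fun u => isOpen_lt continuous_const (hΛcont _)) hcover
  have htne : t.Nonempty := by
    obtain ⟨v, hv⟩ := (NormedSpace.sphere_nonempty (E := Fin K → Fin n → ℝ) (x := 0) (r := 1)).2 zero_le_one
    obtain ⟨u, hu, _⟩ := Set.mem_iUnion₂.1 (ht hv)
    exact ⟨u, hu⟩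
  set c : ℝ := t.inf' htne (fun u => Λ (Qs u.1) u.1 / 2) with hc
  set A : ℝ := t.sup' htne (fun u => ∑ i, α i (Qs u.1 i)) with hA
  have hcpos : 0 < c := by
    rw [hc, Finset.lt_inf'_iff]
    intro u hu
    have hune : (u : Fin K → Fin n → ℝ) ≠ 0 := by
      have h2 := u.2
      intro h
      rw [Metric.mem_sphere, dist_zero_right, h, norm_zero] at h2
      norm_num at h2
    have := hQspos u.1 hune
    linarith
  have hAnn : 0 ≤ A := by
    obtain ⟨u, hu⟩ := htne
    refine le_trans ?_ (Finset.le_sup' _ hu)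
    exact Finset.sum_nonneg fun i _ => hα i _ (hM'sub _ (hQsmem u.1 i) i)
  have hmain : ∀ a : Fin K → Fin n → ℝ, a ≠ 0 → c * ‖a‖ - A ≤ f a := by
    intro a ha
    have hna : 0 < ‖a‖ := norm_pos_iff.2 ha
    have hvs : ‖a‖⁻¹ • a ∈ Metric.sphere (0 : Fin K → Fin n → ℝ) 1 := by
      rw [Metric.mem_sphere, dist_zero_right, norm_smul, norm_inv, norm_norm,
        inv_mul_cancel₀ hna.ne']
    obtain ⟨u, hut, humem⟩ := Set.mem_iUnion₂.1 (ht hvs)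
    have h1 : Λ (Qs u.1) u.1 / 2 < Λ (Qs u.1) (‖a‖⁻¹ • a) := humem
    have h2 : Λ (Qs u.1) (‖a‖⁻¹ • a) = ‖a‖⁻¹ * Λ (Qs u.1) a := hΛhom _ _ _
    have h3 : c ≤ Λ (Qs u.1) u.1 / 2 := Finset.inf'_le _ hut
    have h4 : c < ‖a‖⁻¹ * Λ (Qs u.1) a := by rw [← h2]; linarith
    have h5 : c * ‖a‖ < Λ (Qs u.1) a := by
      have h := mul_lt_mul_of_pos_right h4 hna
      have heq2 : ‖a‖⁻¹ * Λ (Qs u.1) a * ‖a‖ = Λ (Qs u.1) a := by field_simp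
      rw [heq2] at h; exact h
    have h6 : ∑ i, α i (Qs u.1 i) ≤ A := by rw [hA]; exact Finset.le_sup' (fun u : Metric.sphere (0 : Fin K → Fin n → ℝ) 1 => ∑ i, α i (Qs u.1 i)) hut
    have h7 := hflow (Qs u.1) (hQsmem u.1) a
    linarith
  have htend : Tendsto f (Filter.comap (fun a : Fin K → Fin n → ℝ => ‖a‖) Filter.atTop) atTop := by
    rw [tendsto_atTop]
    intro b
    have hmem : {a : Fin K → Fin n → ℝ | max 1 ((b + A) / c) ≤ ‖a‖} ∈
        Filter.comap (fun a : Fin K → Fin n → ℝ => ‖a‖) Filter.atTop :=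
      Filter.preimage_mem_comap (Filter.mem_atTop (max 1 ((b + A) / c)))
    filter_upwards [hmem] with a haR
    have haR' : max 1 ((b + A) / c) ≤ ‖a‖ := haR
    have hR1 : (1:ℝ) ≤ max 1 ((b + A) / c) := le_max_left _ _
    have hane : a ≠ 0 := by
      intro h; rw [h, norm_zero] at haR'; linarith
    have h1 := hmain a hane
    have h2 : b + A ≤ c * ‖a‖ := by
      have h3 : (b + A) / c ≤ ‖a‖ := le_trans (le_max_right _ _) haR'
      calc b + A = c * ((b + A) / c) := by field_simp
        _ ≤ c * ‖a‖ := mul_le_mul_of_nonneg_left h3 hcpos.le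
    linarith
  refine ⟨?_, htend, ?_⟩
  · have hev : ∀ᶠ a in Filter.comap (fun a : Fin K → Fin n → ℝ => ‖a‖) Filter.atTop,
        ((c / 2 : ℝ) : EReal) ≤ ((f a / ‖a‖ : ℝ) : EReal) := by
      have hmem : {a : Fin K → Fin n → ℝ | max 1 (2 * A / c) ≤ ‖a‖} ∈
          Filter.comap (fun a : Fin K → Fin n → ℝ => ‖a‖) Filter.atTop :=
        Filter.preimage_mem_comap (Filter.mem_atTop (max 1 (2 * A / c)))
      filter_upwards [hmem] with a haR
      have haR' : max 1 (2 * A / c) ≤ ‖a‖ := haR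
      have hR1 : (1:ℝ) ≤ max 1 (2 * A / c) := le_max_left _ _
      have hna : 0 < ‖a‖ := by linarith
      have hane : a ≠ 0 := norm_pos_iff.1 hna
      have h1 := hmain a hane
      rw [EReal.coe_le_coe_iff, le_div_iff₀ hna]
      have h2 : A ≤ c / 2 * ‖a‖ := by
        have h3 : 2 * A / c ≤ ‖a‖ := le_trans (le_max_right _ _) haR'
        calc A = c / 2 * (2 * A / c) := by field_simp
          _ ≤ c / 2 * ‖a‖ := mul_le_mul_of_nonneg_left h3 (by linarith)
      linarith
    have hle := Filter.le_liminf_of_le (by isBoundedDefault) hev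
    refine lt_of_lt_of_le ?_ hle
    exact_mod_cast EReal.coe_pos.2 (by linarith : (0:ℝ) < c / 2)
  · have hcont : Continuous f := by
      have hfe : f = fun a => ∑ i : Fin K, r i.castSucc (a i) + r (Fin.last K) (-(∑ i, a i)) :=
        funext hf
      rw [hfe]
      refine Continuous.add ?_ ?_
      · exact continuous_finset_sum _ fun i _ => (hrcont i.castSucc).comp (continuous_apply i)
      · exact (hrcont (Fin.last K)).comp
          ((continuous_finset_sum _ fun i _ => continuous_apply i).neg)
    exact hcont.exists_forall_le (htend.mono_left tendsto_norm_cocompact_atTop.le_comap)
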